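/- If p ∈ [1,2] and the inequality |sin x|^p ≤ A(p)|cos x|^p − B(p)cos(px) holds for all x ∈ [0, π/2] (with A(p), B(p) ≥ 0), then it also holds for all x ∈ [π/2, π], using that cos(p(π−x)) ≥ cos(px) for x ∈ [π/2, π] and 1 ≤ p ≤ 2. -/
import Mathlib


open Real

/-- Extension of Pichorides-type inequality from `[0, π/2]` to `[π/2, π]`. -/
theorem pichorides_extension (p : ℝ) (hp1 : 1 ≤ p) (hp2 : p ≤ 2)
    (A B : ℝ) (hA : 0 ≤ A) (hB : 0 ≤ B)
    (hyp : ∀ x ∈ Set.Icc (0 : ℝ) (π / 2),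
      |Real.sin x| ^ p ≤ A * |Real.cos x| ^ p - B * Real.cos (p * x)) :
    ∀ x ∈ Set.Icc (π / 2) π,
      |Real.sin x| ^ p ≤ A * |Real.cos x| ^ p - B * Real.cos (p * x) := by
  intro x hx
  obtain ⟨hx1, hx2⟩ := hx
  have hpi := pi_pos
  have hy : π - x ∈ Set.Icc (0 : ℝ) (π / 2) := ⟨by linarith, by linarith⟩
  have key := hyp (π - x) hy
  have hsin : Real.sin (π - x) = Real.sin x := Real.sin_pi_sub x
  have hcos : |Real.cos (π - x)| = |Real.cos x| := by
    rw [Real.cos_pi_sub, abs_neg]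
  rw [hsin, hcos] at key
  -- key fact: cos (p*(π-x)) ≥ cos (p*x)
  have hkey : Real.cos (p * x) ≤ Real.cos (p * (π - x)) := by
    have h := Real.cos_sub_cos (p * (π - x)) (p * x)
    have e1 : (p * (π - x) + p * x) / 2 = p * π / 2 := by ring
    have e2 : (p * (π - x) - p * x) / 2 = p * (π - 2 * x) / 2 := by ring
    rw [e1, e2] at h
    have h1 : 0 ≤ Real.sin (p * π / 2) := by
      apply Real.sin_nonneg_of_nonneg_of_le_pi <;> nlinarith
    have h2 : Real.sin (p * (π - 2 * x) / 2) ≤ 0 := by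
      apply Real.sin_nonpos_of_nonpos_of_neg_pi_le <;> nlinarith
    nlinarith
  nlinarith
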